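/- arXiv:1403.5338 — 5 statements merged into one kernel-verified Lean document; each statement's English description precedes it below -/
import Mathlib

section
/- Let x be a covariant causet (c-causet) and let a, b, c be elements of x with a < c < b. Then d(a,b) ≤ d(a,c) + d(c,b), where d is the geodesic distance determined by the unique labeling of x. -/
namespace Causet

variable {α : Type*} [PartialOrder α] [Fintype α]

/-- A labeling of a causet (finite poset): an order-preserving bijection onto `{1,…,|α|}`
(modelled as `Fin (Fintype.card α)`). -/
def IsLabeling (ℓ : α ≃ Fin (Fintype.card α)) : Prop :=
  ∀ a b : α, a < b → ℓ a < ℓ b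

/-- A causet is covariant (a c-causet) if it admits exactly one labeling. -/
def IsCovariant (α : Type*) [PartialOrder α] [Fintype α] : Prop :=
  ∃! ℓ : α ≃ Fin (Fintype.card α), IsLabeling ℓ

/-- `l` is a path from `a` to `b`: a nonempty sequence starting at `a`, ending at `b`,
in which each element is a parent of the next (i.e. is covered by the next). -/
def IsPath (l : List α) (a b : α) : Prop :=
  l ≠ [] ∧ l.head? = some a ∧ l.getLast? = some b ∧ l.Chain' (· ⋖ ·)

/-- The length of a path: the square root of the sum of squared label differences of
consecutive vertices. -/
noncomputable def pathLength (ℓ : α ≃ Fin (Fintype.card α)) (l : List α) : ℝ :=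
  Real.sqrt (((l.zip l.tail).map fun p => (((ℓ p.2 : ℕ) : ℝ) - ((ℓ p.1 : ℕ) : ℝ)) ^ 2).sum)

/-- The distance `d a b`: the minimal length of a path from `a` to `b`. -/
noncomputable def dist (ℓ : α ≃ Fin (Fintype.card α)) (a b : α) : ℝ :=
  sInf {r : ℝ | ∃ l : List α, IsPath l a b ∧ r = pathLength ℓ l}

/-- Existence of a path along a transitive chain of covers. -/
lemma exists_path_of_transGen {a c : α} (h : Relation.TransGen (· ⋖ ·) a c) :
    ∃ l : List α, IsPath l a c := by
  induction h with
  | @single d h1 => exact ⟨[a, d], by simp, by simp, by simp, List.isChain_pair.mpr h1⟩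
  | @tail m d _ hxy ih =>
    obtain ⟨l, hne, hhd, hlast, hch⟩ := ih
    refine ⟨l ++ [d], by simp, ?_, by simp, ?_⟩
    · rwa [List.head?_append_of_ne_nil _ hne]
    · show List.IsChain _ _; rw [List.isChain_append]
      refine ⟨hch, List.isChain_singleton _, fun x hx y hy => ?_⟩
      simp only [List.head?_cons, Option.mem_def, Option.some.injEq] at hy
      rw [hlast] at hx
      simp only [Option.mem_def, Option.some.injEq] at hx
      subst hx; subst hy; exact hxy

/-- Existence of a path between comparable elements of a finite poset. -/
lemma exists_path {a c : α} (h : a < c) : ∃ l : List α, IsPath l a c := by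
  classical
  letI : LocallyFiniteOrder α := Fintype.toLocallyFiniteOrder
  exact exists_path_of_transGen (transGen_covBy_of_lt h)

/-- Consecutive pairs of a concatenated path split. -/
lemma zip_tail_append {l1 t : List α} {c : α} (hne : l1 ≠ []) (hlast : l1.getLast? = some c) :
    (l1 ++ t).zip (l1 ++ t).tail = l1.zip l1.tail ++ (c :: t).zip t := by
  induction l1 with
  | nil => exact absurd rfl hne
  | cons x l1 ih =>
    cases l1 with
    | nil =>
      simp only [List.getLast?_singleton, Option.some.injEq] at hlast
      subst hlast
      simp
    | cons y l1 =>
      have hlast' : (y :: l1).getLast? = some c := by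
        rw [List.getLast?_cons_cons] at hlast; exact hlast
      have ih' := ih (by simp) hlast'
      simp only [List.cons_append, List.tail_cons, List.zip_cons_cons] at ih' ⊢
      rw [ih']

lemma pathLength_nonneg (ℓ : α ≃ Fin (Fintype.card α)) (l : List α) :
    0 ≤ pathLength ℓ l := Real.sqrt_nonneg _

lemma sum_sq_nonneg (ℓ : α ≃ Fin (Fintype.card α)) (l : List α) :
    0 ≤ ((l.zip l.tail).map fun p => (((ℓ p.2 : ℕ) : ℝ) - ((ℓ p.1 : ℕ) : ℝ)) ^ 2).sum := by
  apply List.sum_nonneg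
  intro x hx
  simp only [List.mem_map] at hx
  obtain ⟨p, _, rfl⟩ := hx
  positivity

lemma sqrt_add_le {x y : ℝ} (hx : 0 ≤ x) (hy : 0 ≤ y) :
    Real.sqrt (x + y) ≤ Real.sqrt x + Real.sqrt y := by
  rw [show x + y = Real.sqrt x ^ 2 + Real.sqrt y ^ 2 by rw [Real.sq_sqrt hx, Real.sq_sqrt hy]]
  nlinarith [Real.sqrt_nonneg x, Real.sqrt_nonneg y,
    Real.sqrt_le_sqrt (show Real.sqrt x ^ 2 + Real.sqrt y ^ 2 ≤
      (Real.sqrt x + Real.sqrt y) ^ 2 by nlinarith [Real.sqrt_nonneg x, Real.sqrt_nonneg y]),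
    Real.sqrt_sq (add_nonneg (Real.sqrt_nonneg x) (Real.sqrt_nonneg y))]

/-- Concatenating paths: the result is a path and its length is subadditive. -/
lemma path_concat (ℓ : α ≃ Fin (Fintype.card α)) {l1 l2 : List α} {a b c : α}
    (h1 : IsPath l1 a c) (h2 : IsPath l2 c b) :
    IsPath (l1 ++ l2.tail) a b ∧
      pathLength ℓ (l1 ++ l2.tail) ≤ pathLength ℓ l1 + pathLength ℓ l2 := by
  obtain ⟨hne1, hhd1, hlast1, hch1⟩ := h1
  obtain ⟨hne2, hhd2, hlast2, hch2⟩ := h2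
  obtain ⟨t, rfl⟩ : ∃ t, l2 = c :: t := by
    cases l2 with
    | nil => exact absurd rfl hne2
    | cons h t =>
      simp only [List.head?_cons, Option.some.injEq] at hhd2
      exact ⟨t, by rw [hhd2]⟩
  have hzip := zip_tail_append (t := t) hne1 hlast1
  have hsum : (((l1 ++ t).zip (l1 ++ t).tail).map
        fun p => (((ℓ p.2 : ℕ) : ℝ) - ((ℓ p.1 : ℕ) : ℝ)) ^ 2).sum
      = ((l1.zip l1.tail).map fun p => (((ℓ p.2 : ℕ) : ℝ) - ((ℓ p.1 : ℕ) : ℝ)) ^ 2).sum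
      + (((c :: t).zip t).map fun p => (((ℓ p.2 : ℕ) : ℝ) - ((ℓ p.1 : ℕ) : ℝ)) ^ 2).sum := by
    rw [hzip, List.map_append, List.sum_append]
  constructor
  · refine ⟨by simp [hne1], ?_, ?_, ?_⟩
    · simp only [List.tail_cons]
      rwa [List.head?_append_of_ne_nil _ hne1]
    · simp only [List.tail_cons]
      cases t with
      | nil =>
        simp only [List.getLast?_singleton, Option.some.injEq] at hlast2
        simpa using hlast1.trans (by rw [hlast2])
      | cons z t =>
        rw [List.getLast?_cons_cons] at hlast2
        rw [List.getLast?_append, hlast2]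
        rfl
    · simp only [List.tail_cons]
      show List.IsChain _ _; rw [List.isChain_append]
      refine ⟨hch1, hch2.tail, fun x hx y hy => ?_⟩
      rw [hlast1] at hx
      simp only [Option.mem_def, Option.some.injEq] at hx
      subst hx
      exact (List.isChain_cons.mp hch2).1 y hy
  · unfold pathLength
    simp only [List.tail_cons]
    rw [hsum]
    exact sqrt_add_le (sum_sq_nonneg ℓ l1) (sum_sq_nonneg ℓ (c :: t))

/-- triangle inequality: in a c-causet, if `a < c < b` then
`d(a,b) ≤ d(a,c) + d(c,b)`, where `d` is the geodesic distance determined by the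
unique labeling. -/
theorem dist_triangle (hcov : IsCovariant α)
    (ℓ : α ≃ Fin (Fintype.card α)) (hℓ : IsLabeling ℓ)
    (a b c : α) (hac : a < c) (hcb : c < b) :
    dist ℓ a b ≤ dist ℓ a c + dist ℓ c b := by
  set Sab := {r : ℝ | ∃ l : List α, IsPath l a b ∧ r = pathLength ℓ l} with hSab
  set Sac := {r : ℝ | ∃ l : List α, IsPath l a c ∧ r = pathLength ℓ l} with hSac
  set Scb := {r : ℝ | ∃ l : List α, IsPath l c b ∧ r = pathLength ℓ l} with hScb
  have bdd : ∀ S : Set ℝ, S ⊆ {r : ℝ | ∃ l : List α, r = pathLength ℓ l} → BddBelow S := by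
    intro S hS
    refine ⟨0, fun r hr => ?_⟩
    obtain ⟨l, rfl⟩ := hS hr
    exact pathLength_nonneg ℓ l
  have bddab : BddBelow Sab := bdd _ (fun r ⟨l, _, h⟩ => ⟨l, h⟩)
  have hne_ac : Sac.Nonempty := by
    obtain ⟨l, hl⟩ := exists_path hac
    exact ⟨pathLength ℓ l, l, hl, rfl⟩
  have hne_cb : Scb.Nonempty := by
    obtain ⟨l, hl⟩ := exists_path hcb
    exact ⟨pathLength ℓ l, l, hl, rfl⟩
  have key : ∀ r1 ∈ Sac, ∀ r2 ∈ Scb, dist ℓ a b ≤ r1 + r2 := by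
    rintro r1 ⟨l1, hl1, rfl⟩ r2 ⟨l2, hl2, rfl⟩
    obtain ⟨hpath, hlen⟩ := path_concat ℓ hl1 hl2
    have hmem : pathLength ℓ (l1 ++ l2.tail) ∈ Sab := ⟨_, hpath, rfl⟩
    exact (csInf_le bddab hmem).trans hlen
  have step : ∀ r1 ∈ Sac, dist ℓ a b - dist ℓ c b ≤ r1 := by
    intro r1 hr1
    have : dist ℓ a b - r1 ≤ sInf Scb :=
      le_csInf hne_cb (fun r2 hr2 => by linarith [key r1 hr1 r2 hr2])
    have hd : dist ℓ c b = sInf Scb := rfl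
    linarith [hd ▸ this]
  have : dist ℓ a b - dist ℓ c b ≤ sInf Sac := le_csInf hne_ac step
  have hd : dist ℓ a c = sInf Sac := rfl
  linarith [hd ▸ this]

end Causet
end

section
/- Let x be a covariant causet (c-causet) and let γ be a geodesic from a to b in x. Then every subpath of γ (a subset of the vertices of γ that is again a path, necessarily from some vertex a' of γ to a later vertex b' of γ) is a geodesic from a' to b'. -/
namespace Causet

variable {α : Type*} [PartialOrder α] [Fintype α]

/-- A geodesic from `a` to `b`: a path from `a` to `b` of minimal length. -/
def IsGeodesic (ℓ : α ≃ Fin (Fintype.card α)) (l : List α) (a b : α) : Prop :=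
  IsPath l a b ∧ ∀ l' : List α, IsPath l' a b → pathLength ℓ l ≤ pathLength ℓ l'

/-! ### Auxiliary material -/

/-- The sum of squared label differences (the quantity under the square root in
`pathLength`). -/
noncomputable def sqSum (ℓ : α ≃ Fin (Fintype.card α)) (l : List α) : ℝ :=
  ((l.zip l.tail).map fun p => (((ℓ p.2 : ℕ) : ℝ) - ((ℓ p.1 : ℕ) : ℝ)) ^ 2).sum

lemma pathLength_eq_sqrt (ℓ : α ≃ Fin (Fintype.card α)) (l : List α) :
    pathLength ℓ l = Real.sqrt (sqSum ℓ l) := rfl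

lemma sqSum_nil (ℓ : α ≃ Fin (Fintype.card α)) : sqSum ℓ ([] : List α) = 0 := rfl

lemma sqSum_singleton (ℓ : α ≃ Fin (Fintype.card α)) (x : α) : sqSum ℓ [x] = 0 := rfl

lemma sqSum_cons_cons (ℓ : α ≃ Fin (Fintype.card α)) (x y : α) (t : List α) :
    sqSum ℓ (x :: y :: t) = (((ℓ y : ℕ) : ℝ) - ((ℓ x : ℕ) : ℝ)) ^ 2 + sqSum ℓ (y :: t) := by
  simp [sqSum]

lemma sqSum_nonneg (ℓ : α ≃ Fin (Fintype.card α)) (l : List α) : 0 ≤ sqSum ℓ l := by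
  refine List.sum_nonneg ?_
  intro x hx
  obtain ⟨p, -, rfl⟩ := List.mem_map.1 hx
  positivity

lemma sqSum_append_last (ℓ : α ≃ Fin (Fintype.card α)) :
    ∀ (m : List α) (hm : m ≠ []) (v : List α),
      sqSum ℓ (m ++ v) = sqSum ℓ m + sqSum ℓ (m.getLast hm :: v)
  | [x], _, v => by simp [sqSum_singleton]
  | x :: y :: t, _, v => by
    have ih := sqSum_append_last ℓ (y :: t) (by simp) v
    have hlast : (x :: y :: t).getLast (by simp) = (y :: t).getLast (by simp) :=
      List.getLast_cons (by simp)
    simp only [List.cons_append] at *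
    rw [sqSum_cons_cons, sqSum_cons_cons, ih, hlast]
    ring

lemma sqSum_append_head (ℓ : α ≃ Fin (Fintype.card α)) :
    ∀ (u m : List α) (hm : m ≠ []),
      sqSum ℓ (u ++ m) = sqSum ℓ (u ++ [m.head hm]) + sqSum ℓ m
  | [], m, hm => by simp [sqSum_singleton]
  | [x], m, hm => by
    obtain ⟨h, t, rfl⟩ := List.exists_cons_of_ne_nil hm
    simp only [List.singleton_append, List.head_cons]
    rw [sqSum_cons_cons, sqSum_cons_cons, sqSum_singleton]
    ring
  | x :: y :: u', m, hm => by
    have ih := sqSum_append_head ℓ (y :: u') m hm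
    simp only [List.cons_append] at *
    rw [sqSum_cons_cons, sqSum_cons_cons, ih]
    ring

lemma sqSum_splice (ℓ : α ≃ Fin (Fintype.card α)) (u v m : List α) (hm : m ≠ [])
    (a' b' : α) (hh : m.head? = some a') (hl : m.getLast? = some b') :
    sqSum ℓ (u ++ m ++ v) = sqSum ℓ m + (sqSum ℓ (u ++ [a']) + sqSum ℓ (b' :: v)) := by
  have hmv : m ++ v ≠ [] := by
    intro h; exact hm (List.append_eq_nil_iff.1 h).1
  have hhead : (m ++ v).head hmv = a' := by
    have h1 : (m ++ v).head? = some a' := by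
      rw [List.head?_append, hh]; rfl
    rw [List.head?_eq_head hmv] at h1
    exact Option.some.inj h1
  have hlast : m.getLast hm = b' := by
    rw [List.getLast?_eq_getLast hm] at hl
    exact Option.some.inj hl
  rw [List.append_assoc, sqSum_append_head ℓ u (m ++ v) hmv, hhead,
    sqSum_append_last ℓ m hm v, hlast]
  ring

lemma splice_path {u v m δ : List α} {a b a' b' : α}
    (hm : IsPath m a' b') (hδ : IsPath δ a' b')
    (h : IsPath (u ++ m ++ v) a b) : IsPath (u ++ δ ++ v) a b := by
  obtain ⟨hm0, hmh, hml, hmc⟩ := hm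
  obtain ⟨hδ0, hδh, hδl, hδc⟩ := hδ
  obtain ⟨h0, hh, hl, hc⟩ := h
  refine ⟨?_, ?_, ?_, ?_⟩
  · intro hne
    rcases List.append_eq_nil_iff.1 hne with ⟨hne', -⟩
    exact hδ0 (List.append_eq_nil_iff.1 hne').2
  · rw [List.append_assoc, List.head?_append, List.head?_append, hδh]
    rw [List.append_assoc, List.head?_append, List.head?_append, hmh] at hh
    exact hh
  · rw [List.getLast?_append, List.getLast?_append, hδl]
    rw [List.getLast?_append, List.getLast?_append, hml] at hl
    exact hl
  · unfold List.Chain' at hc ⊢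
    rw [List.append_assoc, List.isChain_append, List.isChain_append] at *
    obtain ⟨hcu, ⟨hcm, hcv, hjmv⟩, hjum⟩ := hc
    refine ⟨hcu, ⟨hδc, hcv, ?_⟩, ?_⟩
    · intro x hx y hy
      rw [hδl] at hx
      refine hjmv x ?_ y hy
      rw [hml]; exact hx
    · intro x hx y hy
      rw [List.head?_append] at hy
      rw [hδh] at hy
      refine hjum x hx y ?_
      rw [List.head?_append, hmh]
      exact hy

lemma prefix_of_drop (γ : List α) (hγc : γ.Chain' (· ⋖ ·)) (hp : γ.Pairwise (· < ·)) :
    ∀ (γ' : List α) (i : Fin γ.length), γ'.Chain' (· ⋖ ·) → (∀ x ∈ γ', x ∈ γ) →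
      γ'.head? = some (γ.get i) → γ' <+: γ.drop (i : ℕ)
  | [], i, _, _, _ => List.nil_prefix
  | [x], i, _, _, hh => by
    have hx : x = γ.get i := Option.some.inj hh
    refine ⟨γ.drop ((i : ℕ) + 1), ?_⟩
    rw [List.drop_eq_getElem_cons i.isLt]
    simp [hx]
  | x :: y :: t, i, hc, hsub, hh => by
    have hx : x = γ.get i := Option.some.inj hh
    have hxy : x ⋖ y := (List.isChain_cons_cons.1 hc).1
    obtain ⟨j, hj⟩ := List.mem_iff_get.1 (hsub y (by simp))
    have hij : (i : ℕ) < (j : ℕ) := by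
      rcases lt_trichotomy (i : ℕ) (j : ℕ) with h | h | h
      · exact h
      · exfalso
        have : x = y := by rw [hx, ← hj]; congr 1; exact Fin.ext h
        exact absurd hxy.lt (by rw [this]; exact lt_irrefl y)
      · exfalso
        have : y < x := by
          rw [hx, ← hj]
          exact List.pairwise_iff_get.1 hp j i h
        exact absurd (hxy.lt.trans this) (lt_irrefl x)
    have hi1 : (i : ℕ) + 1 < γ.length := lt_of_le_of_lt hij j.isLt
    have hy : γ.get ⟨(i : ℕ) + 1, hi1⟩ = y := by
      rcases eq_or_lt_of_le (Nat.succ_le_of_lt hij) with h | h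
      · rw [← hj]; congr 1; exact Fin.ext h
      · exfalso
        have h1 : x ⋖ γ.get ⟨(i : ℕ) + 1, hi1⟩ := by
          rw [hx]
          have := List.isChain_iff_getElem.1 hγc (i : ℕ)
            (by omega)
          exact this
        have h2 : γ.get ⟨(i : ℕ) + 1, hi1⟩ < y := by
          rw [← hj]
          exact List.pairwise_iff_get.1 hp ⟨(i : ℕ) + 1, hi1⟩ j h
        exact hxy.2 h1.lt h2
    have ih := prefix_of_drop γ hγc hp (y :: t) ⟨(i : ℕ) + 1, hi1⟩
      (List.isChain_cons_cons.1 hc).2 (fun z hz => hsub z (by simp [hz]))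
      (by rw [List.head?_cons, hy])
    obtain ⟨w, hw⟩ := ih
    refine ⟨w, ?_⟩
    have hw' : y :: t ++ w = γ.drop ((i : ℕ) + 1) := hw
    rw [List.drop_eq_getElem_cons i.isLt, ← hw', hx]
    simp [List.get_eq_getElem]

/-- in a c-causet, a subpath of a geodesic (a subset of the vertices of
the geodesic which is again a path, from some `a'` to some `b'`) is itself a geodesic. -/
theorem subpath_of_geodesic (hcov : IsCovariant α)
    (ℓ : α ≃ Fin (Fintype.card α)) (hℓ : IsLabeling ℓ)
    (γ : List α) (a b : α) (hγ : IsGeodesic ℓ γ a b)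
    (γ' : List α) (a' b' : α)
    (hsub : ∀ x ∈ γ', x ∈ γ) (hpath : IsPath γ' a' b') :
    IsGeodesic ℓ γ' a' b' := by
  obtain ⟨hγp, hγmin⟩ := hγ
  obtain ⟨hne', hh', hl', hc'⟩ := hpath
  have hγc : γ.Chain' (· ⋖ ·) := hγp.2.2.2
  have hpw : γ.Pairwise (· < ·) :=
    List.isChain_iff_pairwise.1 (hγc.imp fun _ _ h => h.lt)
  -- γ' is an infix of γ
  have ha'mem : a' ∈ γ' := by
    obtain ⟨h, t, rfl⟩ := List.exists_cons_of_ne_nil hne'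
    have : h = a' := Option.some.inj hh'
    simp [this]
  obtain ⟨i, hi⟩ := List.mem_iff_get.1 (hsub a' ha'mem)
  have hhead' : γ'.head? = some (γ.get i) := by rw [hi]; exact hh'
  obtain ⟨w, hw⟩ := prefix_of_drop γ hγc hpw γ' i hc' hsub hhead'
  have hsplit : γ = γ.take (i : ℕ) ++ γ' ++ w := by
    conv_lhs => rw [← List.take_append_drop (i : ℕ) γ]
    rw [← hw, List.append_assoc]
  refine ⟨⟨hne', hh', hl', hc'⟩, fun δ hδ => ?_⟩
  have hγp' : IsPath (γ.take (i : ℕ) ++ γ' ++ w) a b := hsplit ▸ hγp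
  have hnewp : IsPath (γ.take (i : ℕ) ++ δ ++ w) a b :=
    splice_path ⟨hne', hh', hl', hc'⟩ hδ hγp'
  have hmin := hγmin _ hnewp
  rw [pathLength_eq_sqrt, pathLength_eq_sqrt] at hmin ⊢
  replace hmin : Real.sqrt (sqSum ℓ (γ.take (i : ℕ) ++ γ' ++ w)) ≤
      Real.sqrt (sqSum ℓ (γ.take (i : ℕ) ++ δ ++ w)) := by
    rw [← hsplit]; exact hmin
  rw [sqSum_splice ℓ _ _ γ' hne' a' b' hh' hl'] at hmin
  rw [sqSum_splice ℓ _ _ δ hδ.1 a' b' hδ.2.1 hδ.2.2.1] at hmin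
  set C := sqSum ℓ (γ.take (i : ℕ) ++ [a']) + sqSum ℓ (b' :: w) with hC
  have hC0 : 0 ≤ C := add_nonneg (sqSum_nonneg ℓ _) (sqSum_nonneg ℓ _)
  have key : sqSum ℓ γ' ≤ sqSum ℓ δ := by
    have := (Real.sqrt_le_sqrt_iff (add_nonneg (sqSum_nonneg ℓ δ) hC0)).1 hmin
    linarith
  exact (Real.sqrt_le_sqrt_iff (sqSum_nonneg ℓ δ)).2 key

end Causet
end

section
/- Let x be a covariant causet (c-causet) and let a, b, c be elements of x with a < c < b. Then d₁(a,b) ≤ d₁(a,c) + d₁(c,b), where d₁ is the distance determined by the max-step length ℓ₁. -/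
namespace Causet

variable {α : Type*} [PartialOrder α] [Fintype α]

/-- The max-step length `ℓ₁` of a path: the maximum of the absolute label differences of
consecutive vertices. -/
def pathLength1 (ℓ : α ≃ Fin (Fintype.card α)) (l : List α) : ℕ :=
  ((l.zip l.tail).map fun p => (((ℓ p.2 : ℕ) : ℤ) - ((ℓ p.1 : ℕ) : ℤ)).natAbs).foldr max 0

/-- The distance `d₁ a b`: the minimal `ℓ₁`-length of a path from `a` to `b`. -/
noncomputable def dist1 (ℓ : α ≃ Fin (Fintype.card α)) (a b : α) : ℕ :=
  sInf {m : ℕ | ∃ l : List α, IsPath l a b ∧ m = pathLength1 ℓ l}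

lemma pathLength1_cons_cons (ℓ : α ≃ Fin (Fintype.card α)) (x y : α) (r : List α) :
    pathLength1 ℓ (x :: y :: r) =
      max (((ℓ y : ℕ) : ℤ) - ((ℓ x : ℕ) : ℤ)).natAbs (pathLength1 ℓ (y :: r)) := by
  simp [pathLength1]

lemma exists_path_of_lt : ∀ a b : α, a < b → ∃ l : List α, IsPath l a b := by
  classical
  letI : LocallyFiniteOrder α := Fintype.toLocallyFiniteOrder
  intro a
  induction a using WellFoundedGT.induction with
  | _ a IH =>
    intro b hab
    obtain ⟨x, hax, hxb⟩ := exists_covBy_le_of_lt hab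
    rcases eq_or_lt_of_le hxb with rfl | hxb
    · exact ⟨[a, x], by simp, by simp, by simp, List.isChain_pair.mpr hax⟩
    · obtain ⟨l, hl0, hlh, hll, hlc⟩ := IH x hax.lt b hxb
      refine ⟨a :: l, by simp, by simp, ?_, ?_⟩
      · obtain ⟨ys, rfl⟩ := List.getLast?_eq_some_iff.mp hll
        rw [← List.cons_append, List.getLast?_concat]
      · rw [show List.Chain' _ (a :: l) ↔ _ from List.isChain_cons]
        refine ⟨?_, hlc⟩
        intro y hy
        rw [List.head?_eq_head hl0] at hlh hy
        simp only [Option.some_inj] at hlh hy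
        rw [hlh] at hy
        rw [Option.mem_some_iff] at hy
        rwa [← hy]

lemma pathLength1_append_le (ℓ : α ≃ Fin (Fintype.card α)) (c : α) (t : List α) :
    ∀ p : List α, p ≠ [] → p.getLast? = some c →
      pathLength1 ℓ (p ++ t) ≤ max (pathLength1 ℓ p) (pathLength1 ℓ (c :: t))
  | [], h, _ => absurd rfl h
  | [d], _, hd => by
      simp at hd
      subst hd
      simp [pathLength1]
  | x :: y :: r, _, hd => by
      have hd' : (y :: r).getLast? = some c := by
        rwa [List.getLast?_cons_cons] at hd
      have IH := pathLength1_append_le ℓ c t (y :: r) (by simp) hd'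
      have : (x :: y :: r) ++ t = x :: y :: (r ++ t) := by simp
      rw [this, pathLength1_cons_cons, pathLength1_cons_cons]
      have : (y :: r) ++ t = y :: (r ++ t) := by simp
      rw [this] at IH
      omega

/-- triangle inequality for `d₁`: in a c-causet, if `a < c < b` then
`d₁(a,b) ≤ d₁(a,c) + d₁(c,b)`. -/
theorem dist1_triangle (hcov : IsCovariant α)
    (ℓ : α ≃ Fin (Fintype.card α)) (hℓ : IsLabeling ℓ)
    (a b c : α) (hac : a < c) (hcb : c < b) :
    dist1 ℓ a b ≤ dist1 ℓ a c + dist1 ℓ c b := by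
  classical
  have hS1 : {m : ℕ | ∃ l : List α, IsPath l a c ∧ m = pathLength1 ℓ l}.Nonempty := by
    obtain ⟨l, hl⟩ := exists_path_of_lt a c hac
    exact ⟨pathLength1 ℓ l, l, hl, rfl⟩
  have hS2 : {m : ℕ | ∃ l : List α, IsPath l c b ∧ m = pathLength1 ℓ l}.Nonempty := by
    obtain ⟨l, hl⟩ := exists_path_of_lt c b hcb
    exact ⟨pathLength1 ℓ l, l, hl, rfl⟩
  obtain ⟨p, hp, hdp⟩ := Nat.sInf_mem hS1
  obtain ⟨q, hq, hdq⟩ := Nat.sInf_mem hS2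
  obtain ⟨hp0, hph, hpl, hpc⟩ := hp
  obtain ⟨hq0, hqh, hql, hqc⟩ := hq
  -- q = c :: t
  obtain ⟨c', t, rfl⟩ : ∃ c' t, q = c' :: t := ⟨q.head hq0, q.tail, (List.cons_head_tail hq0).symm⟩
  obtain rfl : c' = c := by simpa using hqh
  have ht0 : t ≠ [] := by
    rintro rfl
    simp at hql
    subst hql
    exact lt_irrefl _ hcb
  -- the concatenated path
  have hpath : IsPath (p ++ t) a b := by
    refine ⟨by simp [hp0], ?_, ?_, ?_⟩
    · rw [List.head?_append_of_ne_nil _ hp0]; exact hph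
    · rw [List.getLast?_append_of_ne_nil _ ht0]
      obtain ⟨u, s, rfl⟩ : ∃ u s, t = u :: s := ⟨t.head ht0, t.tail, (List.cons_head_tail ht0).symm⟩
      rwa [List.getLast?_cons_cons] at hql
    · refine List.IsChain.append hpc (List.isChain_cons.mp hqc).2 ?_
      intro x hx y hy
      rw [hpl] at hx
      simp at hx
      subst hx
      exact (List.isChain_cons.mp hqc).1 y hy
  have hmem : pathLength1 ℓ (p ++ t) ∈
      {m : ℕ | ∃ l : List α, IsPath l a b ∧ m = pathLength1 ℓ l} := ⟨p ++ t, hpath, rfl⟩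
  have h1 : dist1 ℓ a b ≤ pathLength1 ℓ (p ++ t) := Nat.sInf_le hmem
  have h2 := pathLength1_append_le ℓ _ t p hp0 hpl
  have h3 : max (pathLength1 ℓ p) (pathLength1 ℓ (c' :: t)) ≤
      pathLength1 ℓ p + pathLength1 ℓ (c' :: t) :=
    max_le (Nat.le_add_right _ _) (Nat.le_add_left _ _)
  have h4 : dist1 ℓ a c' + dist1 ℓ c' b = pathLength1 ℓ p + pathLength1 ℓ (c' :: t) := by
    rw [dist1, dist1, ← hdp, ← hdq]
  omega

end Causet
end

section
/- In the covariant causet x with shell sequence (1,2,3,4), with vertices identified with their labels (1; 2,3; 4,5,6; 7,8,9,10), the path 1-2-5-8 is a 1-geodesic (it has ℓ₁-length 3 = d₁(1,8)), but its subpath 1-2-5 is not a 1-geodesic (it has ℓ₁-length 3 while d₁(1,5) = 2). Hence the subpath-of-a-geodesic property fails for the length ℓ₁. -/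
namespace Causet10

/-- The shell (height) of each of the 10 vertices of the c-causet with shell sequence
(1,2,3,4): vertex `i` (with label `i+1`) lies in shell 0, 1, 2 or 3 according to the
labeling (1; 2,3; 4,5,6; 7,8,9,10). -/
def sh (i : Fin 10) : ℕ :=
  if (i : ℕ) = 0 then 0 else if (i : ℕ) ≤ 2 then 1 else if (i : ℕ) ≤ 5 then 2 else 3

/-- The strict order of the causet: every vertex in shell `j` is below every vertex in
shell `j'` whenever `j < j'`. -/
def lt (a b : Fin 10) : Prop := sh a < sh b

/-- `a` is a parent of `b`: `a < b` and there is no `c` with `a < c < b`. -/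
def Parent (a b : Fin 10) : Prop := lt a b ∧ ¬ ∃ c : Fin 10, lt a c ∧ lt c b

/-- `l` is a path from `a` to `b`: a nonempty sequence starting at `a`, ending at `b`,
in which each element is a parent of the next. -/
def IsPath (l : List (Fin 10)) (a b : Fin 10) : Prop :=
  l ≠ [] ∧ l.head? = some a ∧ l.getLast? = some b ∧ l.Chain' Parent

/-- The `ℓ₁`-length of a path: the maximum of the absolute label differences of
consecutive vertices (vertex `i` has label `i+1`). -/
def len1 (l : List (Fin 10)) : ℕ :=
  ((l.zip l.tail).map fun p =>
    ((((p.2 : ℕ) + 1 : ℕ) : ℤ) - (((p.1 : ℕ) + 1 : ℕ) : ℤ)).natAbs).foldr max 0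

/-- The distance `d₁ a b`: the minimal `ℓ₁`-length of a path from `a` to `b`. -/
noncomputable def d1 (a b : Fin 10) : ℕ :=
  sInf {m : ℕ | ∃ l : List (Fin 10), IsPath l a b ∧ m = len1 l}

/-- A 1-geodesic from `a` to `b`: a path from `a` to `b` of minimal `ℓ₁`-length. -/
def Is1Geodesic (l : List (Fin 10)) (a b : Fin 10) : Prop :=
  IsPath l a b ∧ ∀ l' : List (Fin 10), IsPath l' a b → len1 l ≤ len1 l'

instance (a b : Fin 10) : Decidable (lt a b) := inferInstanceAs (Decidable (sh a < sh b))
instance (a b : Fin 10) : Decidable (Parent a b) :=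
  inferInstanceAs (Decidable (lt a b ∧ ¬ ∃ c : Fin 10, lt a c ∧ lt c b))

lemma parent_step : ∀ a b : Fin 10, Parent a b → sh b = sh a + 1 := by decide

lemma shell_len : ∀ (l : List (Fin 10)) (a b : Fin 10), IsPath l a b →
    sh b + 1 = sh a + l.length := by
  intro l
  induction l with
  | nil => intro a b h; exact absurd rfl h.1
  | cons p t ih =>
    intro a b h
    obtain ⟨-, hh, hl, hc⟩ := h
    simp only [List.head?_cons, Option.some.injEq] at hh
    subst hh
    cases t with
    | nil =>
      simp [List.getLast?] at hl; subst hl; simp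
    | cons q t' =>
      have hpar : Parent p q := (List.isChain_cons_cons.mp hc).1
      have := ih q b ⟨by simp, rfl, by simpa using hl, (List.isChain_cons_cons.mp hc).2⟩
      simp only [List.length_cons] at *
      rw [this, parent_step p q hpar]; ring


lemma aux7 : ∀ q r : Fin 10, Parent 0 q → Parent q r → Parent r 7 →
    3 ≤ len1 [0, q, r, 7] := by decide

lemma aux4 : ∀ q : Fin 10, Parent 0 q → Parent q 4 → 2 ≤ len1 [0, q, 4] := by decide

lemma lower7 : ∀ l : List (Fin 10), IsPath l 0 7 → 3 ≤ len1 l := by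
  intro l hp
  have hlen : l.length = 4 := by
    have := shell_len l 0 7 hp
    have h0 : sh 0 = 0 := rfl
    have h7 : sh 7 = 3 := rfl
    omega
  rcases l with _ | ⟨p, _ | ⟨q, _ | ⟨r, _ | ⟨s, _ | t⟩⟩⟩⟩ <;> simp at hlen
  obtain ⟨-, hh, hl, hc⟩ := hp
  simp only [List.head?_cons, Option.some.injEq] at hh
  simp [List.getLast?] at hl
  subst hh; subst hl
  rcases List.isChain_cons_cons.mp hc with ⟨h1, hc⟩
  rcases List.isChain_cons_cons.mp hc with ⟨h2, hc⟩
  rcases List.isChain_cons_cons.mp hc with ⟨h3, -⟩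
  exact aux7 q r h1 h2 h3

lemma lower4 : ∀ l : List (Fin 10), IsPath l 0 4 → 2 ≤ len1 l := by
  intro l hp
  have hlen : l.length = 3 := by
    have := shell_len l 0 4 hp
    have h0 : sh 0 = 0 := rfl
    have h4 : sh 4 = 2 := rfl
    omega
  rcases l with _ | ⟨p, _ | ⟨q, _ | ⟨r, _ | t⟩⟩⟩ <;> simp at hlen
  obtain ⟨-, hh, hl, hc⟩ := hp
  simp only [List.head?_cons, Option.some.injEq] at hh
  simp [List.getLast?] at hl
  subst hh; subst hl
  rcases List.isChain_cons_cons.mp hc with ⟨h1, hc⟩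
  rcases List.isChain_cons_cons.mp hc with ⟨h2, -⟩
  exact aux4 q h1 h2

lemma path0147 : IsPath [0, 1, 4, 7] 0 7 := by
  refine ⟨by simp, rfl, rfl, ?_⟩
  simp only [List.Chain', List.isChain_cons_cons, List.isChain_singleton, and_true]
  exact ⟨by decide, by decide, by decide⟩

lemma path014 : IsPath [0, 1, 4] 0 4 := by
  refine ⟨by simp, rfl, rfl, ?_⟩
  simp only [List.Chain', List.isChain_cons_cons, List.isChain_singleton, and_true]
  exact ⟨by decide, by decide⟩

lemma path024 : IsPath [0, 2, 4] 0 4 := by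
  refine ⟨by simp, rfl, rfl, ?_⟩
  simp only [List.Chain', List.isChain_cons_cons, List.isChain_singleton, and_true]
  exact ⟨by decide, by decide⟩


/-- in the c-causet with shell sequence (1,2,3,4) and vertices labeled
(1; 2,3; 4,5,6; 7,8,9,10), the path 1-2-5-8 (vertices `[0,1,4,7]`, 0-indexed) is a
1-geodesic of `ℓ₁`-length `3 = d₁(1,8)`, while its subpath 1-2-5 (`[0,1,4]`) is a path
of `ℓ₁`-length 3 which is *not* a 1-geodesic, since `d₁(1,5) = 2`.  Hence the
subpath-of-a-geodesic property fails for `ℓ₁`. -/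
theorem subpath_property_fails_for_len1 :
    Is1Geodesic [0, 1, 4, 7] 0 7 ∧ len1 [0, 1, 4, 7] = 3 ∧ d1 0 7 = 3 ∧
    (∀ v ∈ [(0 : Fin 10), 1, 4], v ∈ [(0 : Fin 10), 1, 4, 7]) ∧
    IsPath [0, 1, 4] 0 4 ∧ len1 [0, 1, 4] = 3 ∧ d1 0 4 = 2 ∧
    ¬ Is1Geodesic [0, 1, 4] 0 4 := by
  have hlen3 : len1 [(0 : Fin 10), 1, 4, 7] = 3 := by decide
  have hlen3' : len1 [(0 : Fin 10), 1, 4] = 3 := by decide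
  have hlen2 : len1 [(0 : Fin 10), 2, 4] = 2 := by decide
  refine ⟨⟨path0147, fun l' hl' => hlen3 ▸ lower7 l' hl'⟩, hlen3, ?_, by decide,
    path014, hlen3', ?_, ?_⟩
  · refine le_antisymm (Nat.sInf_le ⟨[0, 1, 4, 7], path0147, hlen3.symm⟩) ?_
    refine le_csInf ⟨3, [0, 1, 4, 7], path0147, hlen3.symm⟩ ?_
    rintro b ⟨l, hp, rfl⟩
    exact lower7 l hp
  · refine le_antisymm (Nat.sInf_le ⟨[0, 2, 4], path024, hlen2.symm⟩) ?_
    refine le_csInf ⟨2, [0, 2, 4], path024, hlen2.symm⟩ ?_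
    rintro b ⟨l, hp, rfl⟩
    exact lower4 l hp
  · rintro ⟨-, hmin⟩
    have := hmin [0, 2, 4] path024
    rw [hlen3', hlen2] at this
    omega
end Causet10
end

section
/- Let m > 0, 𝐩 = (p₁,p₂,p₃) ∈ ℝ³, p₄ = √(‖𝐩‖² + m²), p = (p₁,p₂,p₃,p₄), and s ∈ {0,1}. Let c^k_{n,j} ∈ ℂ be coupling constants and w(p,·) a discrete plane wave for p. Define the spinor ψ^{(+)}_{p,s}(x_{n,j}) = u(𝐩,s) w(p, x_{n,j}) ∈ ℂ⁴, where u(𝐩,s) = (|s⟩, (𝛔·𝐩)/(p₄+m) |s⟩) in 2+2 block form. Then ψ^{(+)}_{p,s} satisfies the discrete free Dirac equation: (i γ·∇ − m) ψ^{(+)}_{p,s}(x_{n,j}) = 0 for all n, j. -/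
namespace CCausetGrowth

open Matrix

/-- The Pauli matrix σ₁. -/
def σ1 : Matrix (Fin 2) (Fin 2) ℂ := !![0, 1; 1, 0]

/-- The Pauli matrix σ₂. -/
def σ2 : Matrix (Fin 2) (Fin 2) ℂ := !![0, -Complex.I; Complex.I, 0]

/-- The Pauli matrix σ₃. -/
def σ3 : Matrix (Fin 2) (Fin 2) ℂ := !![1, 0; 0, -1]

/-- The gamma matrix `γ₁ = [[0, −σ₁], [σ₁, 0]]` in 2+2 block form. -/
def γ1 : Matrix (Fin 4) (Fin 4) ℂ :=
  !![0, 0, 0, -1; 0, 0, -1, 0; 0, 1, 0, 0; 1, 0, 0, 0]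

/-- The gamma matrix `γ₂ = [[0, −σ₂], [σ₂, 0]]` in 2+2 block form. -/
def γ2 : Matrix (Fin 4) (Fin 4) ℂ :=
  !![0, 0, 0, Complex.I; 0, 0, -Complex.I, 0; 0, -Complex.I, 0, 0; Complex.I, 0, 0, 0]

/-- The gamma matrix `γ₃ = [[0, −σ₃], [σ₃, 0]]` in 2+2 block form. -/
def γ3 : Matrix (Fin 4) (Fin 4) ℂ :=
  !![0, 0, -1, 0; 0, 0, 0, 1; 1, 0, 0, 0; 0, -1, 0, 0]

/-- The gamma matrix `γ₄ = [[σ₄, 0], [0, −σ₄]]` in 2+2 block form. -/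
def γ4 : Matrix (Fin 4) (Fin 4) ℂ :=
  !![1, 0, 0, 0; 0, 1, 0, 0; 0, 0, -1, 0; 0, 0, 0, -1]

/-- The qubits `|0⟩ = (1,0)` and `|1⟩ = (0,1)` in `ℂ²`. -/
def ket (s : Fin 2) : Fin 2 → ℂ := fun i => if i = s then 1 else 0

/-- For `𝐩 ∈ ℝ³`, the matrix `𝛔·𝐩 = p₁σ₁ + p₂σ₂ + p₃σ₃`. -/
noncomputable def sigma3Dot (pv : Fin 3 → ℝ) : Matrix (Fin 2) (Fin 2) ℂ :=
  (pv 0 : ℂ) • σ1 + (pv 1 : ℂ) • σ2 + (pv 2 : ℂ) • σ3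

/-- The covariant difference operator in direction `k` (for `k : Fin 4`, representing
direction `k+1`), acting componentwise on `ℂ⁴`-valued functions (spinors) of the
vertices: `∇_k f(x_{n,j}) = f(x_{n+2,4j+k}) − c^k_{n+2,4j+k} · f(x_{n,j})`, where
`c k N J` is the coupling constant `c^{k+1}_{N,J}`. -/
noncomputable def nablaS (c : Fin 4 → ℕ → ℕ → ℂ) (k : Fin 4)
    (f : ℕ → ℕ → Fin 4 → ℂ) (n j : ℕ) : Fin 4 → ℂ :=
  f (n + 2) (4 * j + (k : ℕ)) - c k (n + 2) (4 * j + (k : ℕ)) • f n j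

/-- `w` is a discrete plane wave in direction `p = (p₁,p₂,p₃,p₄)`:
`w(x_{n+2,4j+k−1}) = (c^k_{n+2,4j+k−1} + i·p_k)·w(x_{n,j})` for `k = 1,2,3` and
`w(x_{n+2,4j+3}) = (c^4_{n+2,4j+3} − i·p₄)·w(x_{n,j})`, at every vertex `x_{n,j}`. -/
def IsPlaneWave (c : Fin 4 → ℕ → ℕ → ℂ) (p : Fin 4 → ℝ) (w : ℕ → ℕ → ℂ) : Prop :=
  ∀ n j : ℕ, 1 ≤ n → j < 2 ^ (n - 1) → ∀ k : Fin 4,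
    w (n + 2) (4 * j + (k : ℕ)) =
      (c k (n + 2) (4 * j + (k : ℕ)) +
        (if (k : ℕ) = 3 then -1 else 1) * Complex.I * (p k : ℂ)) * w n j

/-- The discrete free Dirac operator `i γ·∇ = −iγ₁∇₁ − iγ₂∇₂ − iγ₃∇₃ + iγ₄∇₄` applied to
a spinor-valued function `ψ` at the vertex `x_{n,j}`. -/
noncomputable def diracOp (c : Fin 4 → ℕ → ℕ → ℂ) (ψ : ℕ → ℕ → Fin 4 → ℂ)
    (n j : ℕ) : Fin 4 → ℂ :=
  (-Complex.I) • γ1.mulVec (nablaS c 0 ψ n j) + (-Complex.I) • γ2.mulVec (nablaS c 1 ψ n j)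
    + (-Complex.I) • γ3.mulVec (nablaS c 2 ψ n j) + Complex.I • γ4.mulVec (nablaS c 3 ψ n j)

private lemma dirac_key (p1 p2 p3 p4 m a b q : ℂ)
    (hq : q * (p4 + m) = 1) (hsq : p4 ^ 2 = p1 ^ 2 + p2 ^ 2 + p3 ^ 2 + m ^ 2) :
    p1 • γ1.mulVec ![a, b, q * (p3 * a + (p1 - Complex.I * p2) * b),
        q * ((p1 + Complex.I * p2) * a - p3 * b)]
      + p2 • γ2.mulVec ![a, b, q * (p3 * a + (p1 - Complex.I * p2) * b),
        q * ((p1 + Complex.I * p2) * a - p3 * b)]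
      + p3 • γ3.mulVec ![a, b, q * (p3 * a + (p1 - Complex.I * p2) * b),
        q * ((p1 + Complex.I * p2) * a - p3 * b)]
      + p4 • γ4.mulVec ![a, b, q * (p3 * a + (p1 - Complex.I * p2) * b),
        q * ((p1 + Complex.I * p2) * a - p3 * b)]
      - m • ![a, b, q * (p3 * a + (p1 - Complex.I * p2) * b),
        q * ((p1 + Complex.I * p2) * a - p3 * b)] = 0 := by
  have hI : Complex.I ^ 2 = -1 := Complex.I_sq
  funext i
  fin_cases i <;>
    simp [γ1, γ2, γ3, γ4, Matrix.mulVec, dotProduct, Fin.sum_univ_four]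
  · linear_combination a * q * p2 ^ 2 * hI + q * a * hsq - (p4 - m) * a * hq
  · linear_combination b * q * p2 ^ 2 * hI + q * b * hsq - (p4 - m) * b * hq
  · linear_combination (-(p3 * a + (p1 - Complex.I * p2) * b)) * hq
  · linear_combination (-((p1 + Complex.I * p2) * a - p3 * b)) * hq

/-- let `m > 0`, `𝐩 ∈ ℝ³`, `p₄ = √(‖𝐩‖² + m²)`, `p = (𝐩, p₄)`, and let
`w(p,·)` be a discrete plane wave for `p`.  For `s ∈ {0,1}`, the spinor
`ψ⁺_{p,s}(x_{n,j}) = u(𝐩,s)·w(p,x_{n,j})`, with `u(𝐩,s) = (|s⟩, (𝛔·𝐩)/(p₄+m)|s⟩)` in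
2+2 block form, satisfies the discrete free Dirac equation
`(i γ·∇ − m) ψ⁺_{p,s}(x_{n,j}) = 0`. -/
theorem discrete_dirac_equation_pos (m : ℝ) (hm : 0 < m) (pv : Fin 3 → ℝ) (p4 : ℝ)
    (hp4 : p4 = Real.sqrt ((pv 0) ^ 2 + (pv 1) ^ 2 + (pv 2) ^ 2 + m ^ 2))
    (c : Fin 4 → ℕ → ℕ → ℂ) (w : ℕ → ℕ → ℂ)
    (hw : IsPlaneWave c ![pv 0, pv 1, pv 2, p4] w)
    (s : Fin 2) (u : Fin 4 → ℂ)
    (hu : u = ![ket s 0, ket s 1,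
      (((p4 + m : ℝ) : ℂ)⁻¹ • (sigma3Dot pv).mulVec (ket s)) 0,
      (((p4 + m : ℝ) : ℂ)⁻¹ • (sigma3Dot pv).mulVec (ket s)) 1])
    (ψ : ℕ → ℕ → Fin 4 → ℂ) (hψ : ∀ n j : ℕ, ψ n j = w n j • u) :
    ∀ n j : ℕ, 1 ≤ n → j < 2 ^ (n - 1) →
      diracOp c ψ n j - (m : ℂ) • ψ n j = 0 := by
  intro n j hn hj
  have hsq : (p4 : ℝ) ^ 2 = (pv 0) ^ 2 + (pv 1) ^ 2 + (pv 2) ^ 2 + m ^ 2 := by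
    rw [hp4]; exact Real.sq_sqrt (by positivity)
  have hsqC : ((p4 : ℂ)) ^ 2 = (pv 0 : ℂ) ^ 2 + (pv 1 : ℂ) ^ 2 + (pv 2 : ℂ) ^ 2 + (m : ℂ) ^ 2 := by
    exact_mod_cast congrArg (fun x : ℝ => (x : ℂ)) hsq
  have hp4nn : 0 ≤ p4 := hp4 ▸ Real.sqrt_nonneg _
  have hne : ((p4 : ℂ) + (m : ℂ)) ≠ 0 := by
    have : (0:ℝ) < p4 + m := by linarith
    exact_mod_cast ne_of_gt this
  set q : ℂ := ((p4 + m : ℝ) : ℂ)⁻¹ with hqdef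
  have hq : q * ((p4 : ℂ) + (m : ℂ)) = 1 := by
    rw [hqdef]; push_cast; exact inv_mul_cancel₀ hne
  -- compute the lower components of u
  have hu2 : ((sigma3Dot pv).mulVec (ket s)) 0 =
      (pv 2 : ℂ) * ket s 0 + ((pv 0 : ℂ) - Complex.I * (pv 1)) * ket s 1 := by
    fin_cases s <;>
      simp [sigma3Dot, σ1, σ2, σ3, ket, Matrix.mulVec, dotProduct,
        Fin.sum_univ_two] <;> ring
  have hu3 : ((sigma3Dot pv).mulVec (ket s)) 1 =
      ((pv 0 : ℂ) + Complex.I * (pv 1)) * ket s 0 - (pv 2 : ℂ) * ket s 1 := by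
    fin_cases s <;>
      simp [sigma3Dot, σ1, σ2, σ3, ket, Matrix.mulVec, dotProduct,
        Fin.sum_univ_two] <;> ring
  have hu' : u = ![ket s 0, ket s 1,
      q * ((pv 2 : ℂ) * ket s 0 + ((pv 0 : ℂ) - Complex.I * (pv 1)) * ket s 1),
      q * (((pv 0 : ℂ) + Complex.I * (pv 1)) * ket s 0 - (pv 2 : ℂ) * ket s 1)] := by
    funext i
    rw [hu]
    simp only [Pi.smul_apply, hu2, hu3]
    fin_cases i <;> simp [hu2, hu3, smul_eq_mul] <;> ring
  -- reduce nablaS using the plane wave property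
  have hk : ∀ k : Fin 4, nablaS c k ψ n j =
      (((if (k : ℕ) = 3 then -1 else 1) * Complex.I * ((![pv 0, pv 1, pv 2, p4] k : ℝ) : ℂ))
        * w n j) • u := by
    intro k
    funext i
    simp only [nablaS, hψ, hw n j hn hj k, Pi.sub_apply, Pi.smul_apply, smul_eq_mul]
    ring
  have key := dirac_key (pv 0 : ℂ) (pv 1 : ℂ) (pv 2 : ℂ) (p4 : ℂ) (m : ℂ)
    (ket s 0) (ket s 1) q hq hsqC
  rw [← hu'] at key
  have expand : diracOp c ψ n j - (m : ℂ) • ψ n j =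
      w n j • ((pv 0 : ℂ) • γ1.mulVec u + (pv 1 : ℂ) • γ2.mulVec u
        + (pv 2 : ℂ) • γ3.mulVec u + (p4 : ℂ) • γ4.mulVec u - (m : ℂ) • u) := by
    simp only [diracOp, hk 0, hk 1, hk 2, hk 3, hψ, Matrix.mulVec_smul]
    funext i
    simp only [Pi.add_apply, Pi.sub_apply, Pi.smul_apply, smul_eq_mul,
      Matrix.cons_val_zero, Matrix.cons_val_one, Matrix.head_cons, Matrix.cons_val_two,
      Matrix.tail_cons, Matrix.cons_val_three, Fin.isValue, Fin.val_zero, Fin.val_one,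
      Fin.val_two]
    norm_num
    ring_nf
    simp [Complex.I_sq, show ((3 : Fin 4) : ℕ) = 3 from rfl]
  rw [expand, key, smul_zero]


end CCausetGrowth
end
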